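/- Let ν be the self-similar measure for the IFS {τ_d(x) = (-1)^d ρ(x+d)}_{d∈{-n,...,n}} with equal weights, 0<ρ<1, n ∈ ℕ⁺. Then ν̂(t) = e^{-2πi n t ρ/(1-ρ)} · μ̂_{ρ,D_{2n+1}}(t), where μ_{ρ,D_{2n+1}} is the standard self-similar measure for {x ↦ ρ(x+d)}_{d=0}^{2n} with equal weights. -/

import Mathlib

open MeasureTheory Complex Filter Finset
open scoped ENNReal

noncomputable section

private lemma norm_char' (t x : ℝ) : ‖Complex.exp (2 * (Real.pi:ℂ) * I * t * x)‖ = 1 := by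
  have : 2 * (Real.pi:ℂ) * I * t * x = ((2 * Real.pi * t * x : ℝ):ℂ) * I := by
    push_cast; ring
  rw [this, Complex.norm_exp_ofReal_mul_I]

private lemma integrable_char' (μ : Measure ℝ) [IsFiniteMeasure μ] (t : ℝ) :
    Integrable (fun x : ℝ => Complex.exp (2 * (Real.pi:ℂ) * I * t * x)) μ := by
  refine Integrable.mono' (integrable_const 1) ?_ ?_
  · exact (Continuous.aestronglyMeasurable (by fun_prop))
  · filter_upwards with x
    rw [norm_char']

private lemma char_tendsto' (μ : Measure ℝ) [IsProbabilityMeasure μ] {u : ℕ → ℝ}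
    (hu : Tendsto u atTop (nhds 0)) :
    Tendsto (fun k => ∫ x : ℝ, Complex.exp (2 * (Real.pi:ℂ) * I * (u k) * x) ∂μ)
      atTop (nhds 1) := by
  have h1 : (1 : ℂ) = ∫ _ : ℝ, (1:ℂ) ∂μ := by simp
  rw [h1]
  refine tendsto_integral_of_dominated_convergence (fun _ => 1) ?_ (integrable_const 1) ?_ ?_
  · exact fun k => (Continuous.aestronglyMeasurable (by fun_prop))
  · intro k; filter_upwards with x; rw [norm_char']
  · filter_upwards with x
    have hc : Continuous fun s : ℝ => Complex.exp (2 * (Real.pi:ℂ) * I * s * x) := by fun_prop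
    have := (hc.tendsto 0).comp hu
    simpa [Function.comp_def] using this

private lemma char_map_eq' (μ : Measure ℝ) [IsProbabilityMeasure μ] (a b t : ℝ) :
    ∫ x : ℝ, Complex.exp (2 * (Real.pi:ℂ) * I * t * x)
        ∂(Measure.map (fun x : ℝ => a * (x + b)) μ)
      = Complex.exp (2 * (Real.pi:ℂ) * I * t * ((a*b : ℝ):ℂ))
        * ∫ x : ℝ, Complex.exp (2 * (Real.pi:ℂ) * I * ((a*t : ℝ):ℂ) * x) ∂μ := by
  rw [integral_map (by fun_prop : Measurable fun x : ℝ => a * (x + b)).aemeasurable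
    (Continuous.aestronglyMeasurable (by fun_prop))]
  rw [← integral_const_mul]
  congr 1
  ext x
  rw [← Complex.exp_add]
  congr 1
  push_cast
  ring

private lemma sum_shift' (n : ℕ) (g : ℤ → ℂ) :
    ∑ d ∈ Finset.range (2*n+1), g ((d:ℤ) - n)
      = ∑ j ∈ Finset.Icc (-(n:ℤ)) (n:ℤ), g j := by
  refine Finset.sum_nbij' (fun d => (d:ℤ) - n) (fun z => (z + n).toNat) ?_ ?_ ?_ ?_ ?_
  · intro a ha; simp only [Finset.mem_range] at ha; simp only [Finset.mem_Icc]; omega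
  · intro a ha; simp only [Finset.mem_Icc] at ha; simp only [Finset.mem_range]; omega
  · intro a ha; simp only [Finset.mem_range] at ha; omega
  · intro a ha; simp only [Finset.mem_Icc] at ha; omega
  · intro a _; rfl

private lemma sum_invol' (n : ℕ) (g : ℤ → ℂ) (θ : ℤ → ℤ)
    (hmem : ∀ d ∈ Finset.Icc (-(n:ℤ)) (n:ℤ), θ d ∈ Finset.Icc (-(n:ℤ)) (n:ℤ))
    (hinv : ∀ d ∈ Finset.Icc (-(n:ℤ)) (n:ℤ), θ (θ d) = d) :
    ∑ d ∈ Finset.Icc (-(n:ℤ)) (n:ℤ), g (θ d) = ∑ d ∈ Finset.Icc (-(n:ℤ)) (n:ℤ), g d :=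
  Finset.sum_nbij' θ θ hmem hmem hinv hinv (fun a _ => rfl)

private lemma sigma_cast' (d : ℤ) :
    (((if Even d then d else -d) : ℤ) : ℝ) = (-1:ℝ)^d * (d:ℝ) := by
  rcases Int.even_or_odd d with h | h
  · rw [if_pos h, h.neg_one_zpow, one_mul]
  · rw [if_neg (Int.not_even_iff_odd.2 h), h.neg_one_zpow]
    push_cast; ring

private lemma neg_one_zpow_neg' (d : ℤ) : (-1:ℝ)^(-d) = (-1:ℝ)^d := by
  rcases Int.even_or_odd d with h | h
  · rw [h.neg_one_zpow, (h.neg).neg_one_zpow]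
  · rw [h.neg_one_zpow, (h.neg).neg_one_zpow]

end

theorem ft_symmetric_factorization (n : ℕ) (hn : 0 < n) (ρ : ℝ)
    (hρ : ρ ∈ Set.Ioo (0 : ℝ) 1)
    (ν μ : Measure ℝ) [IsProbabilityMeasure ν] [IsProbabilityMeasure μ]
    (hν : ν = (2 * n + 1 : ℝ≥0∞)⁻¹ • ∑ d ∈ Finset.Icc (-(n : ℤ)) (n : ℤ),
      Measure.map (fun x : ℝ => (-1 : ℝ) ^ d * ρ * (x + (d : ℝ))) ν)
    (hμ : μ = (2 * n + 1 : ℝ≥0∞)⁻¹ • ∑ d ∈ Finset.range (2 * n + 1),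
      Measure.map (fun x : ℝ => ρ * (x + (d : ℝ))) μ) :
    ∀ t : ℝ, (∫ x, Complex.exp (2 * (Real.pi : ℂ) * Complex.I * (t : ℂ) * (x : ℂ)) ∂ν)
      = Complex.exp (-(2 * (Real.pi : ℂ) * Complex.I * (n : ℂ) * (t : ℂ) * (ρ : ℂ)) / (1 - (ρ : ℂ))) *
        ∫ x, Complex.exp (2 * (Real.pi : ℂ) * Complex.I * (t : ℂ) * (x : ℂ)) ∂μ := by
  obtain ⟨hρ0, hρ1⟩ := hρ
  have h1ρ : (1:ℝ) - ρ ≠ 0 := by linarith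
  set c : ℝ := n * ρ / (1 - ρ) with hcdef
  have hcℝ : (n:ℝ) * ρ + c * ρ = c := by
    rw [hcdef]; field_simp; ring
  have hcℂ : (n:ℂ) * (ρ:ℂ) + (c:ℂ) * (ρ:ℂ) = (c:ℂ) := by exact_mod_cast hcℝ
  set π : ℂ := (Real.pi : ℂ) with hπdef
  let ψ : ℝ → ℂ := fun s => ∫ x : ℝ, Complex.exp (2 * π * I * s * x) ∂ν
  let φ : ℝ → ℂ := fun s => ∫ x : ℝ, Complex.exp (2 * π * I * s * x) ∂μ
  let G : ℝ → ℂ := fun s => Complex.exp (-(2 * π * I * c * s)) * φ s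
  have hψ : ∀ s : ℝ, ψ s = ∫ x : ℝ, Complex.exp (2 * π * I * s * x) ∂ν := fun _ => rfl
  have hφ : ∀ s : ℝ, φ s = ∫ x : ℝ, Complex.exp (2 * π * I * s * x) ∂μ := fun _ => rfl
  have hG : ∀ s : ℝ, G s = Complex.exp (-(2 * π * I * c * s)) * φ s := fun _ => rfl
  set w : ℝ := ((2*n+1 : ℝ))⁻¹ with hwdef
  have htoReal : ((2 * n + 1 : ℝ≥0∞)⁻¹).toReal = w := by
    rw [hwdef, ENNReal.toReal_inv]
    congr 1
  -- functional equation for ψ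
  have Eν : ∀ s : ℝ, ψ s = w • ∑ d ∈ Finset.Icc (-(n:ℤ)) (n:ℤ),
      Complex.exp (2 * π * I * s * ((((-1:ℝ)^d * ρ) * (d:ℝ) : ℝ) : ℂ))
        * ψ ((((-1:ℝ)^d * ρ) * s : ℝ)) := by
    intro s
    have hprob : ∀ d : ℤ, IsProbabilityMeasure
        (Measure.map (fun x : ℝ => (-1:ℝ)^d * ρ * (x + (d:ℝ))) ν) := fun d =>
      Measure.isProbabilityMeasure_map (by fun_prop : Measurable fun x : ℝ =>
        (-1:ℝ)^d * ρ * (x + (d:ℝ))).aemeasurable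
    rw [hψ s]
    conv_lhs => rw [hν]
    rw [integral_smul_measure, htoReal,
      integral_finset_sum_measure (fun d _ => by
        haveI := hprob d
        exact integrable_char' _ s)]
    congr 1
    refine Finset.sum_congr rfl fun d _ => ?_
    rw [hπdef]
    exact char_map_eq' ν ((-1:ℝ)^d * ρ) (d:ℝ) s
  -- functional equation for φ
  have Eμ : ∀ s : ℝ, φ s = w • ∑ d ∈ Finset.range (2*n+1),
      Complex.exp (2 * π * I * s * ((ρ * (d:ℝ) : ℝ) : ℂ)) * φ ((ρ * s : ℝ)) := by
    intro s
    have hprob : ∀ d : ℕ, IsProbabilityMeasure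
        (Measure.map (fun x : ℝ => ρ * (x + (d:ℝ))) μ) := fun d =>
      Measure.isProbabilityMeasure_map (by fun_prop : Measurable fun x : ℝ =>
        ρ * (x + (d:ℝ))).aemeasurable
    rw [hφ s]
    conv_lhs => rw [hμ]
    rw [integral_smul_measure, htoReal,
      integral_finset_sum_measure (fun d _ => by
        haveI := hprob d
        exact integrable_char' _ s)]
    congr 1
    refine Finset.sum_congr rfl fun d _ => ?_
    rw [hπdef]
    exact char_map_eq' μ ρ (d:ℝ) s
  -- conjugation lemmas
  have conj_exp : ∀ z : ℂ, (starRingEnd ℂ) (Complex.exp z) = Complex.exp ((starRingEnd ℂ) z) :=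
    fun z => by rw [← Complex.exp_conj]
  have conjψ : ∀ s : ℝ, ψ (-s) = (starRingEnd ℂ) (ψ s) := by
    intro s
    rw [hψ, hψ, ← integral_conj]
    congr 1; ext x
    rw [conj_exp]
    congr 1
    rw [hπdef]
    simp only [map_neg, map_mul, Complex.conj_I, Complex.conj_ofReal, map_ofNat]
    push_cast
    ring
  have conjφ : ∀ s : ℝ, φ (-s) = (starRingEnd ℂ) (φ s) := by
    intro s
    rw [hφ, hφ, ← integral_conj]
    congr 1; ext x
    rw [conj_exp]
    congr 1
    rw [hπdef]
    simp only [map_neg, map_mul, Complex.conj_I, Complex.conj_ofReal, map_ofNat]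
    push_cast
    ring
  have conjG : ∀ s : ℝ, G (-s) = (starRingEnd ℂ) (G s) := by
    intro s
    rw [hG, hG, map_mul, conj_exp, conjφ]
    congr 2
    rw [hπdef]
    simp only [map_neg, map_mul, Complex.conj_I, Complex.conj_ofReal, map_ofNat]
    push_cast
    ring
  -- involution machinery
  set θ : ℤ → ℤ := fun d => if Even d then d else -d with hθdef
  have hθmem : ∀ d ∈ Finset.Icc (-(n:ℤ)) (n:ℤ), θ d ∈ Finset.Icc (-(n:ℤ)) (n:ℤ) := by
    intro d hd
    simp only [Finset.mem_Icc] at hd ⊢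
    simp only [hθdef]
    split_ifs <;> omega
  have hθinv : ∀ d ∈ Finset.Icc (-(n:ℤ)) (n:ℤ), θ (θ d) = d := by
    intro d _
    by_cases h : Even d
    · simp [hθdef, h]
    · simp [hθdef, h]
  have hnegmem : ∀ d ∈ Finset.Icc (-(n:ℤ)) (n:ℤ), -d ∈ Finset.Icc (-(n:ℤ)) (n:ℤ) := by
    intro d hd; simp only [Finset.mem_Icc] at *; omega
  have hneginv : ∀ d ∈ Finset.Icc (-(n:ℤ)) (n:ℤ), -(-d) = d := fun d _ => neg_neg d
  -- functional equation for G
  have EG : ∀ s : ℝ, G s = w • ∑ d ∈ Finset.Icc (-(n:ℤ)) (n:ℤ),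
      Complex.exp (2 * π * I * s * ((((-1:ℝ)^d * ρ) * (d:ℝ) : ℝ) : ℂ))
        * G ((ρ * s : ℝ)) := by
    intro s
    rw [hG s, Eμ s, mul_smul_comm, Finset.mul_sum]
    congr 1
    calc ∑ d ∈ Finset.range (2*n+1),
          Complex.exp (-(2 * π * I * c * s)) * (Complex.exp (2 * π * I * s * ((ρ * (d:ℝ) : ℝ):ℂ)) * φ ((ρ*s : ℝ)))
        = ∑ d ∈ Finset.range (2*n+1),
          (fun j : ℤ => Complex.exp (2 * π * I * ((j:ℝ) : ℂ) * ((ρ * s : ℝ):ℂ)) * G ((ρ * s : ℝ))) ((d:ℤ) - n) := by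
          refine Finset.sum_congr rfl fun d _ => ?_
          simp only []
          rw [hG ((ρ * s : ℝ)), ← mul_assoc, ← Complex.exp_add, ← mul_assoc, ← Complex.exp_add]
          congr 2
          push_cast
          linear_combination (2*π*I*(s:ℂ)) * hcℂ
      _ = ∑ j ∈ Finset.Icc (-(n:ℤ)) (n:ℤ),
          (fun j : ℤ => Complex.exp (2 * π * I * ((j:ℝ) : ℂ) * ((ρ * s : ℝ):ℂ)) * G ((ρ * s : ℝ))) j :=
          by exact sum_shift' n (fun j : ℤ =>
            Complex.exp (2 * π * I * ((j:ℝ):ℂ) * ((ρ * s : ℝ):ℂ)) * G ((ρ * s : ℝ)))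
      _ = ∑ d ∈ Finset.Icc (-(n:ℤ)) (n:ℤ),
          (fun j : ℤ => Complex.exp (2 * π * I * ((j:ℝ) : ℂ) * ((ρ * s : ℝ):ℂ)) * G ((ρ * s : ℝ))) (θ d) :=
          by exact (sum_invol' n _ θ hθmem hθinv).symm
      _ = ∑ d ∈ Finset.Icc (-(n:ℤ)) (n:ℤ),
          Complex.exp (2 * π * I * s * ((((-1:ℝ)^d * ρ) * (d:ℝ) : ℝ) : ℂ)) * G ((ρ * s : ℝ)) := by
          refine Finset.sum_congr rfl fun d _ => ?_
          show Complex.exp (2 * π * I * (((θ d : ℤ):ℝ) : ℂ) * ((ρ * s : ℝ):ℂ)) * G ((ρ * s : ℝ)) = _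
          congr 1
          rw [show ((θ d : ℤ):ℝ) = (-1:ℝ)^d * (d:ℝ) from by rw [hθdef]; exact sigma_cast' d]
          push_cast
          ring
  -- functional equation for G ∘ neg
  have EG' : ∀ s : ℝ, G (-s) = w • ∑ d ∈ Finset.Icc (-(n:ℤ)) (n:ℤ),
      Complex.exp (2 * π * I * s * ((((-1:ℝ)^d * ρ) * (d:ℝ) : ℝ) : ℂ))
        * G (-(ρ * s) : ℝ) := by
    intro s
    rw [EG (-s)]
    congr 1
    rw [← sum_invol' n
      (fun d : ℤ => Complex.exp (2 * π * I * ((-s : ℝ):ℂ) * ((((-1:ℝ)^d * ρ) * (d:ℝ) : ℝ) : ℂ))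
        * G ((ρ * (-s) : ℝ))) Neg.neg hnegmem hneginv]
    refine Finset.sum_congr rfl fun d _ => ?_
    show Complex.exp (2 * π * I * ((-s : ℝ):ℂ) * ((((-1:ℝ)^(-d) * ρ) * ((-d : ℤ):ℝ) : ℝ) : ℂ))
        * G ((ρ * (-s) : ℝ)) = _
    rw [neg_one_zpow_neg' d, mul_neg ρ s]
    congr 1
    push_cast
    ring
  -- key contraction bound
  have key : ∀ s : ℝ,
      max ‖ψ s - G s‖ ‖ψ s - G (-s)‖
        ≤ max ‖ψ (ρ*s) - G (ρ*s)‖ ‖ψ (ρ*s) - G (-(ρ*s))‖ := by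
    intro s
    set M : ℝ := max ‖ψ (ρ*s) - G (ρ*s)‖ ‖ψ (ρ*s) - G (-(ρ*s))‖ with hM
    have hM0 : 0 ≤ M := le_trans (norm_nonneg _) (le_max_left _ _)
    have hcard : ((Finset.Icc (-(n:ℤ)) (n:ℤ)).card : ℝ) = 2*n+1 := by
      rw [Int.card_Icc]
      rw [show ((n:ℤ) + 1 - (-(n:ℤ))).toNat = 2*n+1 from by omega]
      push_cast
      ring
    have hwpos : (0:ℝ) < w := by rw [hwdef]; positivity
    have habs : |w| = w := abs_of_pos hwpos
    have bound : ∀ (F : ℤ → ℂ), (∀ d ∈ Finset.Icc (-(n:ℤ)) (n:ℤ), ‖F d‖ ≤ M) →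
        ‖w • ∑ d ∈ Finset.Icc (-(n:ℤ)) (n:ℤ),
          Complex.exp (2 * π * I * s * ((((-1:ℝ)^d * ρ) * (d:ℝ) : ℝ) : ℂ)) * F d‖ ≤ M := by
      intro F hF
      rw [norm_smul, Real.norm_eq_abs, habs]
      have h1 : ‖∑ d ∈ Finset.Icc (-(n:ℤ)) (n:ℤ),
          Complex.exp (2 * π * I * s * ((((-1:ℝ)^d * ρ) * (d:ℝ) : ℝ) : ℂ)) * F d‖
          ≤ (2*n+1) * M := by
        refine le_trans (norm_sum_le _ _) ?_
        have h2 : ∀ d ∈ Finset.Icc (-(n:ℤ)) (n:ℤ),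
            ‖Complex.exp (2 * π * I * s * ((((-1:ℝ)^d * ρ) * (d:ℝ) : ℝ) : ℂ)) * F d‖ ≤ M := by
          intro d hd
          rw [norm_mul, hπdef, norm_char' s (((-1:ℝ)^d * ρ) * (d:ℝ)), one_mul]
          exact hF d hd
        calc ∑ d ∈ Finset.Icc (-(n:ℤ)) (n:ℤ),
              ‖Complex.exp (2 * π * I * s * ((((-1:ℝ)^d * ρ) * (d:ℝ) : ℝ) : ℂ)) * F d‖
            ≤ ∑ _d ∈ Finset.Icc (-(n:ℤ)) (n:ℤ), M := Finset.sum_le_sum h2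
          _ = (2*n+1) * M := by rw [Finset.sum_const, nsmul_eq_mul, hcard]
      calc w * ‖∑ d ∈ Finset.Icc (-(n:ℤ)) (n:ℤ),
            Complex.exp (2 * π * I * s * ((((-1:ℝ)^d * ρ) * (d:ℝ) : ℝ) : ℂ)) * F d‖
          ≤ w * ((2*n+1) * M) := mul_le_mul_of_nonneg_left h1 (le_of_lt hwpos)
        _ = M := by rw [hwdef]; field_simp
    have hD : ‖ψ s - G s‖ ≤ M := by
      rw [Eν s, EG s, ← smul_sub, ← Finset.sum_sub_distrib]
      simp only [← mul_sub]
      refine bound _ ?_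
      intro d hd
      rcases Int.even_or_odd d with h | h
      · rw [h.neg_one_zpow, one_mul]
        exact le_max_left _ _
      · rw [h.neg_one_zpow, show ((-1:ℝ)*ρ)*s = -(ρ*s) from by ring, conjψ (ρ*s)]
        have hg : G ((ρ*s : ℝ)) = (starRingEnd ℂ) (G (-(ρ*s))) := by
          have := conjG (-(ρ*s))
          rw [neg_neg] at this
          rw [this]
        rw [hg, ← map_sub, RCLike.norm_conj]
        exact le_max_right _ _
    have hE : ‖ψ s - G (-s)‖ ≤ M := by
      rw [Eν s, EG' s, ← smul_sub, ← Finset.sum_sub_distrib]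
      simp only [← mul_sub]
      refine bound _ ?_
      intro d hd
      rcases Int.even_or_odd d with h | h
      · rw [h.neg_one_zpow, one_mul]
        exact le_max_right _ _
      · rw [h.neg_one_zpow, show ((-1:ℝ)*ρ)*s = -(ρ*s) from by ring, conjψ (ρ*s),
          conjG (ρ*s), ← map_sub, RCLike.norm_conj]
        exact le_max_left _ _
    exact max_le hD hE
  -- iterate the contraction
  intro t
  have iter : ∀ k : ℕ, max ‖ψ t - G t‖ ‖ψ t - G (-t)‖
      ≤ max ‖ψ (ρ^k * t) - G (ρ^k * t)‖ ‖ψ (ρ^k * t) - G (-(ρ^k * t))‖ := by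
    intro k
    induction k with
    | zero => simp
    | succ k ih =>
        refine le_trans ih ?_
        have := key (ρ^k * t)
        rw [show ρ * (ρ^k * t) = ρ^(k+1) * t from by ring] at this
        exact this
  -- limits
  have hlim : Tendsto (fun k : ℕ => ρ^k * t) atTop (nhds 0) := by
    have := (tendsto_pow_atTop_nhds_zero_of_lt_one (le_of_lt hρ0) hρ1).mul_const t
    simpa using this
  have hψlim : Tendsto (fun k : ℕ => ψ (ρ^k * t)) atTop (nhds 1) := by
    simp only [hψ, hπdef]
    exact char_tendsto' ν hlim
  have hGlim : ∀ u : ℕ → ℝ, Tendsto u atTop (nhds 0) →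
      Tendsto (fun k => G (u k)) atTop (nhds 1) := by
    intro u hu
    have hφlim : Tendsto (fun k : ℕ => φ (u k)) atTop (nhds 1) := by
      simp only [hφ, hπdef]
      exact char_tendsto' μ hu
    have hexp : Tendsto (fun k : ℕ => Complex.exp (-(2 * π * I * c * (u k)))) atTop (nhds 1) := by
      have hcont : Continuous fun r : ℝ => Complex.exp (-(2 * π * I * c * r)) := by
        fun_prop
      have := (hcont.tendsto 0).comp hu
      simpa [Function.comp_def] using this
    have := hexp.mul hφlim
    rw [mul_one] at this
    simp only [hG]
    exact this
  have hDlim : Tendsto (fun k : ℕ =>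
      max ‖ψ (ρ^k * t) - G (ρ^k * t)‖ ‖ψ (ρ^k * t) - G (-(ρ^k * t))‖) atTop (nhds 0) := by
    have h1 : Tendsto (fun k : ℕ => ‖ψ (ρ^k * t) - G (ρ^k * t)‖) atTop (nhds 0) := by
      have := (hψlim.sub (hGlim _ hlim)).norm
      simpa using this
    have h2 : Tendsto (fun k : ℕ => ‖ψ (ρ^k * t) - G (-(ρ^k * t))‖) atTop (nhds 0) := by
      have hneg : Tendsto (fun k : ℕ => -(ρ^k * t)) atTop (nhds 0) := by
        have := hlim.neg; simpa using this
      have := (hψlim.sub (hGlim _ hneg)).norm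
      simpa using this
    have := h1.max h2
    simpa using this
  have hfinal : max ‖ψ t - G t‖ ‖ψ t - G (-t)‖ ≤ 0 :=
    ge_of_tendsto hDlim (Filter.Eventually.of_forall iter)
  have hDzero : ψ t = G t := by
    have h0 : ‖ψ t - G t‖ ≤ 0 := le_trans (le_max_left _ _) hfinal
    have := le_antisymm h0 (norm_nonneg _)
    rw [norm_eq_zero, sub_eq_zero] at this
    exact this
  -- conclusion
  have hρℂ : (1:ℂ) - (ρ:ℂ) ≠ 0 := by
    rw [sub_ne_zero]
    intro h
    apply h1ρ
    have : (ρ:ℂ) = (1:ℝ) := by rw [← h]; norm_num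
    have := Complex.ofReal_injective this.symm
    linarith [this]
  have hc2 : (c:ℂ) * (1 - (ρ:ℂ)) = (n:ℂ) * (ρ:ℂ) := by linear_combination (-1:ℂ) * hcℂ
  rw [← hψ t, hDzero, hG t, ← hφ t]
  congr 2
  rw [eq_div_iff hρℂ]
  linear_combination (-(2*π*I*(t:ℂ))) * hc2
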